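/- Let G be a Euclidean (positive definite) metric on 𝐖 = W ⊕ W* admitting a decomposition 𝐖 = W₊ ⊕ W₋ with W₊ maximal g-positive, W₋ maximal g-negative, W₊ ⊥_g W₋, and G|_{W±} = ±2g|_{W±}. Then W± ∩ W = 0, and W± are graphs W± = {(X, (ψ ± γ)♭X) : X ∈ W} where ψ is a 2-form on W and γ is a positive definite symmetric bilinear form on W. Thus generalized metrics correspond bijectively to pairs (γ, ψ). -/

import Mathlib

open LinearMap

lemma graph_of_submodule (W : Type*) [AddCommGroup W] [Module ℝ W] [FiniteDimensional ℝ W]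
    (S : Submodule ℝ (W × Module.Dual ℝ W))
    (hker : ∀ α : Module.Dual ℝ W, ((0 : W), α) ∈ S → α = 0)
    (hdim : Module.finrank ℝ S = Module.finrank ℝ W) :
    ∃ A : W →ₗ[ℝ] Module.Dual ℝ W, S = LinearMap.graph A := by
  set f : S →ₗ[ℝ] W := (LinearMap.fst ℝ W (Module.Dual ℝ W)).comp S.subtype with hf
  have hfap : ∀ m : S, f m = (m : W × Module.Dual ℝ W).1 := fun m => rfl
  have hker0 : LinearMap.ker f = ⊥ := by
    rw [eq_bot_iff]
    intro m hm
    rw [LinearMap.mem_ker] at hm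
    have h1 : (m : W × Module.Dual ℝ W).1 = 0 := hm
    have h2 : (m : W × Module.Dual ℝ W).2 = 0 := by
      apply hker
      rw [← h1]
      exact m.2
    simp only [Submodule.mem_bot]
    ext <;> simp [h1, h2]
  have hinj : Function.Injective f := (LinearMap.ker_eq_bot (M := S) (M₂ := W)).mp hker0
  have hsurj : Function.Surjective f :=
    (LinearMap.injective_iff_surjective_of_finrank_eq_finrank (K := ℝ) (V := S) (V₂ := W) hdim).mp hinj
  let e := LinearEquiv.ofBijective f ⟨hinj, hsurj⟩
  have heap : ∀ m : S, e m = (m : W × Module.Dual ℝ W).1 := fun m => hfap m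
  let A : W →ₗ[ℝ] Module.Dual ℝ W :=
    ((LinearMap.snd ℝ W (Module.Dual ℝ W)).comp S.subtype).comp e.symm.toLinearMap
  have hAap : ∀ X : W, A X = ((e.symm X : S) : W × Module.Dual ℝ W).2 := fun X => rfl
  refine ⟨A, ?_⟩
  ext p
  rw [LinearMap.mem_graph_iff]
  constructor
  · intro hp
    have : e.symm p.1 = ⟨p, hp⟩ := by
      apply e.injective
      rw [e.apply_symm_apply, heap]
    rw [hAap, this]
  · intro hp
    have h1 : ((e.symm p.1 : S) : W × Module.Dual ℝ W).1 = p.1 := by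
      rw [← heap, e.apply_symm_apply]
    have : p = ((e.symm p.1 : S) : W × Module.Dual ℝ W) := by
      ext
      · exact h1.symm
      · rw [hp, hAap]
    rw [this]
    exact (e.symm p.1).2

/-- The neutral metric `g((X,α),(Y,μ)) = (α(Y) + μ(X))/2` on `W ⊕ W*`. -/
noncomputable def neutralMetric (W : Type*) [AddCommGroup W] [Module ℝ W] :
    (W × Module.Dual ℝ W) → (W × Module.Dual ℝ W) → ℝ :=
  fun p q => (p.2 q.1 + q.2 p.1) / 2

/-- Let `G` be a positive definite (generalized) metric on `𝐖 = W ⊕ W*` with a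
decomposition `𝐖 = W₊ ⊕ W₋` into maximal `g`-positive / `g`-negative subspaces
with `W₊ ⊥_g W₋`, `W₊ ⊥_G W₋` and `G|_{W±} = ±2 g|_{W±}`.  Then `W± ∩ W = 0`
and `W±` are the graphs of `(ψ ± γ)♭` for a `2`-form `ψ` and a positive
definite symmetric form `γ` on `W`; so `G` corresponds to the pair `(γ, ψ)`. -/
theorem generalized_metric_graphs
    (W : Type*) [AddCommGroup W] [Module ℝ W] [FiniteDimensional ℝ W]
    (G : LinearMap.BilinForm ℝ (W × Module.Dual ℝ W))
    (hGsymm : ∀ p q, G p q = G q p)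
    (hGpos : ∀ p, p ≠ 0 → 0 < G p p)
    (Wp Wn : Submodule ℝ (W × Module.Dual ℝ W))
    (hcompl : IsCompl Wp Wn)
    (hdimp : Module.finrank ℝ Wp = Module.finrank ℝ W)
    (hdimn : Module.finrank ℝ Wn = Module.finrank ℝ W)
    (hgpos : ∀ p ∈ Wp, p ≠ 0 → 0 < neutralMetric W p p)
    (hgneg : ∀ p ∈ Wn, p ≠ 0 → neutralMetric W p p < 0)
    (hgorth : ∀ p ∈ Wp, ∀ q ∈ Wn, neutralMetric W p q = 0)
    (hGorth : ∀ p ∈ Wp, ∀ q ∈ Wn, G p q = 0)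
    (hGp : ∀ p ∈ Wp, ∀ q ∈ Wp, G p q = 2 * neutralMetric W p q)
    (hGn : ∀ p ∈ Wn, ∀ q ∈ Wn, G p q = -(2 * neutralMetric W p q)) :
    (∀ X : W, ((X, (0 : Module.Dual ℝ W)) ∈ Wp → X = 0) ∧
              ((X, (0 : Module.Dual ℝ W)) ∈ Wn → X = 0)) ∧
    ∃! γψ : (W →ₗ[ℝ] Module.Dual ℝ W) × (W →ₗ[ℝ] Module.Dual ℝ W),
      (∀ X Y : W, γψ.1 X Y = γψ.1 Y X) ∧
      (∀ X : W, X ≠ 0 → 0 < γψ.1 X X) ∧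
      (∀ X Y : W, γψ.2 X Y = - γψ.2 Y X) ∧
      Wp = LinearMap.graph (γψ.2 + γψ.1) ∧
      Wn = LinearMap.graph (γψ.2 - γψ.1) := by

  -- g is zero on pairs with vanishing second or first component used below
  have hnm : ∀ p q : W × Module.Dual ℝ W, neutralMetric W p q = (p.2 q.1 + q.2 p.1) / 2 :=
    fun p q => rfl
  -- elements of Wp/Wn with zero first component are zero
  have hkerp : ∀ α : Module.Dual ℝ W, ((0 : W), α) ∈ Wp → α = 0 := by
    intro α hα
    by_contra h
    have hne : ((0 : W), α) ≠ 0 := by simp [Prod.ext_iff, h]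
    have := hgpos _ hα hne
    rw [hnm] at this
    simp at this
  have hkern : ∀ α : Module.Dual ℝ W, ((0 : W), α) ∈ Wn → α = 0 := by
    intro α hα
    by_contra h
    have hne : ((0 : W), α) ≠ 0 := by simp [Prod.ext_iff, h]
    have := hgneg _ hα hne
    rw [hnm] at this
    simp at this
  have hWp : ∀ X : W, ((X, (0 : Module.Dual ℝ W)) ∈ Wp → X = 0) := by
    intro X hX
    by_contra h
    have hne : ((X : W), (0 : Module.Dual ℝ W)) ≠ 0 := by simp [Prod.ext_iff, h]
    have := hgpos _ hX hne
    rw [hnm] at this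
    simp at this
  have hWn : ∀ X : W, ((X, (0 : Module.Dual ℝ W)) ∈ Wn → X = 0) := by
    intro X hX
    by_contra h
    have hne : ((X : W), (0 : Module.Dual ℝ W)) ≠ 0 := by simp [Prod.ext_iff, h]
    have := hgneg _ hX hne
    rw [hnm] at this
    simp at this
  refine ⟨fun X => ⟨hWp X, hWn X⟩, ?_⟩
  obtain ⟨Ap, hAp⟩ := graph_of_submodule W Wp hkerp hdimp
  obtain ⟨An, hAn⟩ := graph_of_submodule W Wn hkern hdimn
  have hmemp : ∀ X : W, (X, Ap X) ∈ Wp := by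
    intro X; rw [hAp, LinearMap.mem_graph_iff]
  have hmemn : ∀ X : W, (X, An X) ∈ Wn := by
    intro X; rw [hAn, LinearMap.mem_graph_iff]
  -- g-orthogonality of the graphs: An Y X = - Ap X Y
  have horth : ∀ X Y : W, An Y X = - Ap X Y := by
    intro X Y
    have := hgorth _ (hmemp X) _ (hmemn Y)
    rw [hnm] at this
    dsimp at this
    linarith
  -- Ap is positive definite
  have hApos : ∀ X : W, X ≠ 0 → 0 < Ap X X := by
    intro X hX
    have hne : ((X : W), Ap X) ≠ 0 := fun h => hX (congrArg Prod.fst h)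
    have := hgpos _ (hmemp X) hne
    rw [hnm] at this
    dsimp at this
    linarith
  -- candidate pair
  set γ : W →ₗ[ℝ] Module.Dual ℝ W := (2⁻¹ : ℝ) • (Ap - An) with hγ
  set ψ : W →ₗ[ℝ] Module.Dual ℝ W := (2⁻¹ : ℝ) • (Ap + An) with hψ
  have hγap : ∀ X Y : W, γ X Y = (Ap X Y - An X Y) / 2 := by
    intro X Y
    rw [hγ]
    simp only [LinearMap.smul_apply, LinearMap.sub_apply, smul_eq_mul]
    ring
  have hψap : ∀ X Y : W, ψ X Y = (Ap X Y + An X Y) / 2 := by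
    intro X Y
    rw [hψ]
    simp only [LinearMap.smul_apply, LinearMap.add_apply, smul_eq_mul]
    ring
  have hsum : ψ + γ = Ap := by
    ext X Y
    simp only [LinearMap.add_apply, hγap, hψap]
    ring
  have hdiff : ψ - γ = An := by
    ext X Y
    simp only [LinearMap.sub_apply, hγap, hψap]
    have h1 : An X Y = - Ap Y X := by
      have := horth Y X; linarith
    linarith [hγap X Y, hψap X Y]
  refine ⟨(γ, ψ), ⟨?_, ?_, ?_, ?_, ?_⟩, ?_⟩
  · intro X Y
    have h1 : An X Y = - Ap Y X := by have := horth Y X; linarith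
    have h2 : An Y X = - Ap X Y := horth X Y
    rw [hγap, hγap, h1, h2]
    ring
  · intro X hX
    have h1 : An X X = - Ap X X := horth X X
    rw [hγap, h1]
    have := hApos X hX
    linarith
  · intro X Y
    have h1 : An X Y = - Ap Y X := by have := horth Y X; linarith
    have h2 : An Y X = - Ap X Y := horth X Y
    rw [hψap, hψap, h1, h2]
    ring
  · rw [show (γ, ψ).2 + (γ, ψ).1 = Ap from hsum]; exact hAp
  · rw [show (γ, ψ).2 - (γ, ψ).1 = An from hdiff]; exact hAn
  · rintro ⟨γ', ψ'⟩ ⟨-, -, -, hp', hn'⟩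
    have graph_inj : ∀ f g : W →ₗ[ℝ] Module.Dual ℝ W,
        LinearMap.graph f = LinearMap.graph g → f = g := by
      intro f g h
      ext X
      have hm : (X, f X) ∈ LinearMap.graph g := by
        rw [← h, LinearMap.mem_graph_iff]
      rw [LinearMap.mem_graph_iff] at hm
      rw [show f X = g X from hm]
    have h1 : ψ' + γ' = Ap := graph_inj _ _ (hp'.symm.trans hAp)
    have h2 : ψ' - γ' = An := graph_inj _ _ (hn'.symm.trans hAn)
    have hg : γ' = γ := by
      ext X Y
      have a1 : ψ' X Y + γ' X Y = Ap X Y := by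
        have := congrArg (fun f : W →ₗ[ℝ] Module.Dual ℝ W => f X Y) h1
        simpa using this
      have a2 : ψ' X Y - γ' X Y = An X Y := by
        have := congrArg (fun f : W →ₗ[ℝ] Module.Dual ℝ W => f X Y) h2
        simpa using this
      rw [hγap]
      linarith
    have hs : ψ' = ψ := by
      ext X Y
      have a1 : ψ' X Y + γ' X Y = Ap X Y := by
        have := congrArg (fun f : W →ₗ[ℝ] Module.Dual ℝ W => f X Y) h1
        simpa using this
      have a2 : ψ' X Y - γ' X Y = An X Y := by
        have := congrArg (fun f : W →ₗ[ℝ] Module.Dual ℝ W => f X Y) h2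
        simpa using this
      rw [hψap]
      linarith
    rw [Prod.ext_iff]
    exact ⟨hg, hs⟩
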